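/- Let v₀, v₁,…,v_M be unit vectors in ℝⁿ such that for each k = 0,…,M−1 there is an index i_k ∈ {1,…,n} with v_{k+1} − v_k = ‖v_{k+1} − v_k‖ α_{i_k}. Suppose that for every i ∈ {1,…,n} the points v₀,…,v_M do not all lie strictly on one side of the hyperplane H_i, i.e., for each i there exists k_i ∈ {0,…,M} with ⟨v₀, α_i⟩ · ⟨v_{k_i}, α_i⟩ ≤ 0. Then Σ_{k=0}^{M−1} ‖v_{k+1} − v_k‖ ≥ max_{1≤i≤n} |⟨v₀, α_i⟩| ≥ δ, where δ = min over unit vectors y ∈ ℝⁿ of max_{1≤i≤n} |⟨y, α_i⟩|. -/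
import Mathlib


open RealInnerProductSpace

/-- If `v 0, …, v M` are unit vectors forming a zigzag line (each difference being a
nonnegative multiple of some `α i`), and for each `i` the points do not all lie strictly
on one side of the hyperplane `H i`, then the length of the zigzag line is at least
`max_i |⟪v 0, α i⟫|`, which is at least `δ = min_{‖y‖=1} max_i |⟪y, α i⟫|`. -/
theorem zigzag_length_ge_delta
    (n M : ℕ) [NeZero n] (α : Fin n → EuclideanSpace ℝ (Fin n))
    (hα : LinearIndependent ℝ α) (hunit : ∀ i, ‖α i‖ = 1)
    (v : ℕ → EuclideanSpace ℝ (Fin n)) (hv : ∀ k ≤ M, ‖v k‖ = 1)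
    (hzig : ∀ k < M, ∃ i : Fin n, v (k + 1) - v k = ‖v (k + 1) - v k‖ • α i)
    (hsides : ∀ i : Fin n, ∃ k ≤ M, ⟪v 0, α i⟫ * ⟪v k, α i⟫ ≤ 0)
    (δ : ℝ)
    (hδ : IsLeast {x : ℝ | ∃ y : EuclideanSpace ℝ (Fin n), ‖y‖ = 1 ∧
        x = Finset.univ.sup' Finset.univ_nonempty fun i => |⟪y, α i⟫|} δ) :
    (Finset.univ.sup' Finset.univ_nonempty fun i => |⟪v 0, α i⟫|) ≤
        ∑ k ∈ Finset.range M, ‖v (k + 1) - v k‖ ∧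
      δ ≤ Finset.univ.sup' Finset.univ_nonempty fun i => |⟪v 0, α i⟫| := by
  constructor
  · apply Finset.sup'_le
    intro i _
    obtain ⟨k, hkM, hk⟩ := hsides i
    have h1 : |⟪v 0, α i⟫| ≤ |⟪v 0, α i⟫ - ⟪v k, α i⟫| := by
      rcases abs_cases (⟪v 0, α i⟫) with ⟨h1, h2⟩ | ⟨h1, h2⟩ <;>
        rcases abs_cases (⟪v 0, α i⟫ - ⟪v k, α i⟫) with ⟨h3, h4⟩ | ⟨h3, h4⟩ <;>
          nlinarith
    have h2 : |⟪v 0, α i⟫ - ⟪v k, α i⟫| = |⟪v 0 - v k, α i⟫| := by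
      rw [inner_sub_left]
    have h3 : |⟪v 0 - v k, α i⟫| ≤ ‖v 0 - v k‖ := by
      calc |⟪v 0 - v k, α i⟫| ≤ ‖v 0 - v k‖ * ‖α i‖ := abs_real_inner_le_norm _ _
        _ = ‖v 0 - v k‖ := by rw [hunit i, mul_one]
    have h4 : ‖v 0 - v k‖ ≤ ∑ j ∈ Finset.range k, ‖v (j + 1) - v j‖ := by
      have := Finset.sum_range_sub v k
      calc ‖v 0 - v k‖ = ‖∑ j ∈ Finset.range k, (v (j + 1) - v j)‖ := by
            rw [this, norm_sub_rev]
        _ ≤ ∑ j ∈ Finset.range k, ‖v (j + 1) - v j‖ := norm_sum_le _ _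
    have h5 : ∑ j ∈ Finset.range k, ‖v (j + 1) - v j‖ ≤
        ∑ j ∈ Finset.range M, ‖v (j + 1) - v j‖ := by
      apply Finset.sum_le_sum_of_subset_of_nonneg
      · exact Finset.range_subset_range.2 hkM
      · intro j _ _; exact norm_nonneg _
    linarith
  · exact hδ.2 ⟨v 0, hv 0 (Nat.zero_le M), rfl⟩
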